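/- For p, q ∈ (0,1), the function L(w₁,w₂) = q·(p + (1-p)·(1-w₁)²) + (1-q)·((1-p)·(1-w₁-w₂)² + p·(1-w₂)²) has a global minimizer whose first coordinate satisfies w₁ = q/(p + q - p·q). -/

import Mathlib

theorem stmt_4 (p q : ℝ) (hp : p ∈ Set.Ioo (0:ℝ) 1) (hq : q ∈ Set.Ioo (0:ℝ) 1) :
    ∃ w : ℝ × ℝ,
      (∀ v : ℝ × ℝ,
        q * (p + (1 - p) * (1 - w.1)^2) +
          (1 - q) * ((1 - p) * (1 - w.1 - w.2)^2 + p * (1 - w.2)^2) ≤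
        q * (p + (1 - p) * (1 - v.1)^2) +
          (1 - q) * ((1 - p) * (1 - v.1 - v.2)^2 + p * (1 - v.2)^2)) ∧
      w.1 = q / (p + q - p * q) := by
  obtain ⟨hp0, hp1⟩ := hp
  obtain ⟨hq0, hq1⟩ := hq
  have hD : 0 < p + q - p * q := by nlinarith
  refine ⟨(q / (p + q - p * q), p / (p + q - p * q)), ?_, rfl⟩
  intro v
  rw [← sub_nonneg]
  have key : q * (p + (1 - p) * (1 - v.1)^2) +
      (1 - q) * ((1 - p) * (1 - v.1 - v.2)^2 + p * (1 - v.2)^2) -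
      (q * (p + (1 - p) * (1 - q / (p + q - p * q))^2) +
       (1 - q) * ((1 - p) * (1 - q / (p + q - p * q) - p / (p + q - p * q))^2 +
        p * (1 - p / (p + q - p * q))^2)) =
      (q * (1 - p) * (v.1 - q / (p + q - p * q))^2
        + (1 - q) * (1 - p) * (v.1 + v.2 - q / (p + q - p * q) - p / (p + q - p * q))^2
        + (1 - q) * p * (v.2 - p / (p + q - p * q))^2) := by
    generalize hE : p + q - p * q = D at *
    have hD' : D ≠ 0 := hD.ne'
    field_simp
    rw [← hE]
    ring
  rw [key]
  have h1 : 0 ≤ q * (1 - p) * (v.1 - q / (p + q - p * q))^2 :=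
    mul_nonneg (mul_nonneg hq0.le (by linarith)) (sq_nonneg _)
  have h2 : 0 ≤ (1 - q) * (1 - p) * (v.1 + v.2 - q / (p + q - p * q) - p / (p + q - p * q))^2 :=
    mul_nonneg (mul_nonneg (by linarith) (by linarith)) (sq_nonneg _)
  have h3 : 0 ≤ (1 - q) * p * (v.2 - p / (p + q - p * q))^2 :=
    mul_nonneg (mul_nonneg (by linarith) hp0.le) (sq_nonneg _)
  linarith
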